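/- In a dagger category, every partial isometry is †-Drazin with its adjoint as †-Drazin inverse: if f : A ⟶ B satisfies f ≫ f† ≫ f = f, then f† is a †-Drazin inverse of f, and moreover axiom [D†.1] holds with k = 1, i.e. (f ≫ f†) ≫ f ≫ f† = f ≫ f† and f† ≫ f ≫ (f† ≫ f) = f† ≫ f. -/
import Mathlib

open CategoryTheory

universe v u

/-- A dagger on a category: an identity-on-objects contravariant involution. -/
structure Dagger (C : Type u) [Category.{v} C] where
  dag : ∀ {X Y : C}, (X ⟶ Y) → (Y ⟶ X)
  dag_id : ∀ X : C, dag (𝟙 X) = 𝟙 X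
  dag_comp : ∀ {X Y Z : C} (f : X ⟶ Y) (g : Y ⟶ Z), dag (f ≫ g) = dag g ≫ dag f
  dag_dag : ∀ {X Y : C} (f : X ⟶ Y), dag (dag f) = f

/-- Iterated composition power of an endomorphism, with `cpow x 0 = 𝟙 A`. -/
def cpow {C : Type u} [Category.{v} C] {A : C} (x : A ⟶ A) : ℕ → (A ⟶ A)
  | 0 => 𝟙 A
  | n + 1 => cpow x n ≫ x

/-- `p` is a †-Drazin inverse of `f`. -/
def IsDagDrazinInv {C : Type u} [Category.{v} C] (D : Dagger C)
    {A B : C} (f : A ⟶ B) (p : B ⟶ A) : Prop :=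
  (∃ k : ℕ, cpow (f ≫ D.dag f) k ≫ f ≫ p = cpow (f ≫ D.dag f) k ∧
    p ≫ f ≫ cpow (D.dag f ≫ f) k = cpow (D.dag f ≫ f) k) ∧
  p ≫ f ≫ p = p ∧
  D.dag (f ≫ p) = f ≫ p ∧
  D.dag (p ≫ f) = p ≫ f

/-- Every partial isometry is †-Drazin with its adjoint as †-Drazin inverse, with index ≤ 1. -/
theorem partialIsometry_dagDrazin {C : Type u} [Category.{v} C] (D : Dagger C)
    {A B : C} (f : A ⟶ B) (hf : f ≫ D.dag f ≫ f = f) :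
    IsDagDrazinInv D f (D.dag f) ∧
    (f ≫ D.dag f) ≫ f ≫ D.dag f = f ≫ D.dag f ∧
    D.dag f ≫ f ≫ (D.dag f ≫ f) = D.dag f ≫ f := by
  have hf2 : D.dag f ≫ f ≫ D.dag f = D.dag f := by
    have h := congrArg D.dag hf
    rw [D.dag_comp, D.dag_comp, D.dag_dag] at h
    simpa using h
  have hfa := reassoc_of% hf
  have hf2a := reassoc_of% hf2
  refine ⟨⟨⟨1, ?_, ?_⟩, ?_, ?_, ?_⟩, ?_, ?_⟩ <;>
    simp [cpow, hfa, hf2a, hf, hf2, D.dag_comp, D.dag_dag]
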